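/- Let c > 0 and let v ∈ ℝ³ with 0 < ‖v‖ < c; set γ := (1 − ‖v‖²/c²)^{−1/2}. For u ∈ ℝ³ let b := √(c² + ‖u‖²), and define u* := u/γ − (1 − γ)(⟨v, u⟩/(γ‖v‖²)) v, u′ := γ(u* − (v/c) b), and b′ := γ(b − ⟨u, v⟩/c). Then b′ > 0 and b′ = √(c² + ‖u′‖²) (equivalently b′² − ‖u′‖² = c²). Moreover, with u′* := u′/γ − (1 − γ)(⟨v, u′⟩/(γ‖v‖²)) v, the inverse relations hold: u = γ(u′* + (v/c) b′) and b = γ(b′ + ⟨u′, v⟩/c). -/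

import Mathlib

open scoped RealInnerProductSpace

set_option maxHeartbeats 1000000 in
/-- The proper-time group transformations (equations (10) and (11) of the
paper). With `γ := (1 − ‖v‖²/c²)^{−1/2}`, `b := √(c² + ‖u‖²)`,
`u* := u/γ − (1 − γ)(⟨v,u⟩/(γ‖v‖²)) v`, `u′ := γ(u* − (v/c) b)` and
`b′ := γ(b − ⟨u,v⟩/c)`, we have `b′ > 0`, `b′ = √(c² + ‖u′‖²)`, and the inverse
relations `u = γ(u′* + (v/c) b′)` and `b = γ(b′ + ⟨u′,v⟩/c)`. -/
theorem stmt4 (c : ℝ) (hc : 0 < c) (v : EuclideanSpace ℝ (Fin 3))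
    (hv0 : 0 < ‖v‖) (hvc : ‖v‖ < c)
    (γ : ℝ) (hγ : γ = (Real.sqrt (1 - ‖v‖ ^ 2 / c ^ 2))⁻¹)
    (u : EuclideanSpace ℝ (Fin 3))
    (b : ℝ) (hb : b = Real.sqrt (c ^ 2 + ‖u‖ ^ 2))
    (ustar : EuclideanSpace ℝ (Fin 3))
    (hustar : ustar = γ⁻¹ • u - ((1 - γ) * (⟪v, u⟫ / (γ * ‖v‖ ^ 2))) • v)
    (u' : EuclideanSpace ℝ (Fin 3)) (hu' : u' = γ • (ustar - (b / c) • v))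
    (b' : ℝ) (hb' : b' = γ * (b - ⟪u, v⟫ / c))
    (u'star : EuclideanSpace ℝ (Fin 3))
    (hu'star : u'star = γ⁻¹ • u' - ((1 - γ) * (⟪v, u'⟫ / (γ * ‖v‖ ^ 2))) • v) :
    0 < b' ∧
    b' = Real.sqrt (c ^ 2 + ‖u'‖ ^ 2) ∧
    u = γ • (u'star + (b' / c) • v) ∧
    b = γ * (b' + ⟪u', v⟫ / c) := by
  have hcne : c ≠ 0 := hc.ne'
  have hV : (0:ℝ) < ‖v‖ ^ 2 := by positivity
  have hVne : ‖v‖ ^ 2 ≠ 0 := hV.ne'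
  have hvne : ‖v‖ ≠ 0 := hv0.ne'
  have hcV : (0:ℝ) < c ^ 2 - ‖v‖ ^ 2 := by nlinarith
  have hs : (0:ℝ) < 1 - ‖v‖ ^ 2 / c ^ 2 := by
    rw [sub_pos, div_lt_one (by positivity)]
    nlinarith
  have hγpos : 0 < γ := by
    rw [hγ]
    exact inv_pos.mpr (Real.sqrt_pos.mpr hs)
  have hγne : γ ≠ 0 := hγpos.ne'
  have hγ2 : γ ^ 2 * (c ^ 2 - ‖v‖ ^ 2) = c ^ 2 := by
    have : γ ^ 2 = (1 - ‖v‖ ^ 2 / c ^ 2)⁻¹ := by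
      rw [hγ, ← Real.sqrt_inv, Real.sq_sqrt (by positivity)]
    rw [this]
    field_simp [hcV.ne']
  have hb2 : b ^ 2 = c ^ 2 + ‖u‖ ^ 2 := by
    rw [hb]; exact Real.sq_sqrt (by positivity)
  have hbpos : 0 < b := by
    rw [hb]; exact Real.sqrt_pos.mpr (by positivity)
  set p : ℝ := ⟪v, u⟫ with hp
  clear_value p
  have hpc : ⟪u, v⟫ = p := by rw [real_inner_comm]; exact hp.symm
  set α : ℝ := (1 - γ) * p / ‖v‖ ^ 2 + γ * b / c with hα
  clear_value α
  have hcoef : γ * ((1 - γ) * (p / (γ * ‖v‖ ^ 2))) + γ * (b / c) = α := by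
    rw [hα]; field_simp
  have hu'v : u' = u - α • v := by
    rw [hu', hustar, smul_sub, smul_sub, smul_smul, smul_smul, smul_smul,
      mul_inv_cancel₀ hγne, one_smul, sub_sub, ← add_smul, hcoef]
  have hvu' : ⟪v, u'⟫ = p - α * ‖v‖ ^ 2 := by
    rw [hu'v, inner_sub_right, real_inner_smul_right, real_inner_self_eq_norm_sq, ← hp]
  have hu'norm : ‖u'‖ ^ 2 = ‖u‖ ^ 2 - 2 * (α * p) + α ^ 2 * ‖v‖ ^ 2 := by
    rw [hu'v, norm_sub_sq_real, real_inner_smul_right, hpc, norm_smul, mul_pow, Real.norm_eq_abs, sq_abs]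
  -- positivity of b'
  have hub : ‖u‖ < b := by nlinarith [norm_nonneg u]
  have hple : p ≤ ‖v‖ * ‖u‖ := by rw [hp]; exact real_inner_le_norm v u
  have hb'pos : 0 < b' := by
    have h2 : 0 < b - p / c := by
      rw [sub_pos, div_lt_iff₀ hc]
      calc p ≤ ‖v‖ * ‖u‖ := hple
        _ < c * b := mul_lt_mul'' hvc hub (norm_nonneg v) (norm_nonneg u)
        _ = b * c := mul_comm c b
    rw [hb', hpc]
    exact mul_pos hγpos h2
  -- b'^2 = c^2 + ‖u'‖^2
  have hb'sq : c ^ 2 + ‖u'‖ ^ 2 = b' ^ 2 := by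
    rw [hu'norm, hb', hpc, hα]
    linear_combination (norm := (field_simp; ring))
      (-(b ^ 2 / c ^ 2 - p ^ 2 / (c ^ 2 * ‖v‖ ^ 2))) * hγ2 - hb2
  refine ⟨hb'pos, ?_, ?_, ?_⟩
  · rw [hb'sq, Real.sqrt_sq hb'pos.le]
  · rw [hu'star, hvu', hu'v, hb', hpc, hα]
    match_scalars
    · field_simp
    · field_simp [hγne, hvne, hcne]
      linear_combination (-p) * hγ2
  · rw [hb', hpc, real_inner_comm v u', hvu', hα]
    field_simp
    linear_combination (-b) * hγ2
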